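/- Every non-reflexive Banach space X admits a bounded biorthogonal system ((e_i),(f_j)) (with f_i(e_j) = δ_{ij}, both sequences bounded) such that either sup_n ‖∑_{i≤n} e_i‖ < ∞ or sup_n ‖∑_{i≤n} f_i‖ < ∞. Conversely, if X is reflexive, then no bounded biorthogonal system has uniformly bounded partial sums of either sequence. -/

import Mathlib

open Filter Topology NormedSpace

lemma ultra_functional {W : Type*} [NormedAddCommGroup W] [NormedSpace ℝ W]
    (w : ℕ → (W →L[ℝ] ℝ)) (M : ℝ) (hM : ∀ n, ‖w n‖ ≤ M) :
    ∃ g : W →L[ℝ] ℝ, ∀ y, Tendsto (fun n => w n y) (hyperfilter ℕ : Filter ℕ) (𝓝 (g y)) := by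
  have habs : ∀ (y : W) (n : ℕ), |(w n) y| ≤ M * ‖y‖ := by
    intro y n
    calc |(w n) y| = ‖(w n) y‖ := (Real.norm_eq_abs _).symm
    _ ≤ ‖w n‖ * ‖y‖ := (w n).le_opNorm y
    _ ≤ M * ‖y‖ := by gcongr; exact hM n
  have hex : ∀ y : W, ∃ L, Tendsto (fun n => w n y) (hyperfilter ℕ : Filter ℕ) (𝓝 L) := by
    intro y
    have hmap : ((hyperfilter ℕ).map fun n => (w n) y : Filter ℝ)
        ≤ 𝓟 (Set.Icc (-(M * ‖y‖)) (M * ‖y‖)) := by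
      rw [Filter.le_principal_iff]
      exact Filter.mem_map.mpr (Filter.univ_mem'
        fun n => Set.mem_Icc.mpr (abs_le.mp (habs y n)))
    obtain ⟨L, _, hL⟩ := (isCompact_Icc (a := -(M * ‖y‖)) (b := M * ‖y‖)).ultrafilter_le_nhds
      ((hyperfilter ℕ).map fun n => (w n) y) (by exact_mod_cast hmap)
    exact ⟨L, hL⟩
  choose L hL using hex
  have hadd : ∀ y z, L (y + z) = L y + L z := by
    intro y z
    refine tendsto_nhds_unique ?_ ((hL y).add (hL z))
    simpa using hL (y + z)
  have hsmul : ∀ (c : ℝ) y, L (c • y) = c * L y := by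
    intro c y
    refine tendsto_nhds_unique ?_ ((hL y).const_mul c)
    simpa [mul_comm] using hL (c • y)
  have hbound : ∀ y, |L y| ≤ M * ‖y‖ := fun y =>
    le_of_tendsto (hL y).abs (Filter.Eventually.of_forall (habs y))
  exact ⟨LinearMap.mkContinuous ⟨⟨L, hadd⟩, hsmul⟩ M
    (fun y => by simpa [Real.norm_eq_abs] using hbound y), hL⟩

lemma helly {X : Type*} [NormedAddCommGroup X] [NormedSpace ℝ X]
    {ι : Type*} [Fintype ι] (g : ι → (X →L[ℝ] ℝ)) (c : ι → ℝ) {M ε : ℝ}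
    (hM : 0 ≤ M) (hε : 0 < ε)
    (h : ∀ a : ι → ℝ, |∑ i, a i * c i| ≤ M * ‖∑ i, a i • g i‖) :
    ∃ x : X, ‖x‖ < M + ε ∧ ∀ i, g i x = c i := by
  classical
  set Tc : X →L[ℝ] (ι → ℝ) := ContinuousLinearMap.pi g with hTc
  set T : X →ₗ[ℝ] (ι → ℝ) := Tc.toLinearMap with hT
  set u : ι → (ι → ℝ) := fun i => fun j => if i = j then (1:ℝ) else 0 with hu
  -- Step (a): c is in the range of T
  have hrange : c ∈ LinearMap.range T := by
    by_contra hc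
    set V : Submodule ℝ (ι → ℝ) := LinearMap.range T with hV
    have hmkc : (Submodule.Quotient.mk c : (ι → ℝ) ⧸ V) ≠ 0 := by
      simpa [Submodule.Quotient.mk_eq_zero] using hc
    obtain ⟨ψ, hψ⟩ : ∃ ψ : Module.Dual ℝ ((ι → ℝ) ⧸ V), ψ (Submodule.Quotient.mk c) ≠ 0 := by
      by_contra hall
      push_neg at hall
      exact hmkc ((Module.forall_dual_apply_eq_zero_iff ℝ _).mp hall)
    set a : ι → ℝ := fun i => ψ (Submodule.Quotient.mk (u i)) with ha
    have key : ∀ v : ι → ℝ, ψ (Submodule.Quotient.mk v) = ∑ i, v i * a i := by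
      intro v
      have hv : v = ∑ i, v i • u i := pi_eq_sum_univ v
      calc ψ (Submodule.Quotient.mk v)
          = ψ (Submodule.Quotient.mk (∑ i, v i • u i)) := by rw [← hv]
        _ = (ψ ∘ₗ V.mkQ) (∑ i, v i • u i) := rfl
        _ = ∑ i, v i * a i := by
            rw [map_sum]
            simp [ha, map_smul, smul_eq_mul, Submodule.mkQ_apply]
    have hzero : (∑ i, a i • g i) = 0 := by
      ext x
      have h1 : (∑ i, a i • g i) x = ∑ i, (T x) i * a i := by
        simp [ContinuousLinearMap.sum_apply, ContinuousLinearMap.smul_apply, hT, hTc,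
          ContinuousLinearMap.coe_pi, smul_eq_mul, mul_comm]
      rw [ContinuousLinearMap.zero_apply, h1, ← key (T x)]
      have h2 : (Submodule.Quotient.mk (T x) : (ι → ℝ) ⧸ V) = 0 :=
        (Submodule.Quotient.mk_eq_zero V).mpr ⟨x, rfl⟩
      simp [h2]
    have h3 := h a
    rw [hzero] at h3
    simp only [norm_zero, mul_zero, abs_nonpos_iff] at h3
    rw [show ∑ i, a i * c i = ∑ i, c i * a i by simp [mul_comm], ← key c] at h3
    exact hψ h3
  obtain ⟨x0, hx0⟩ := hrange
  -- Step (b)+(c): the quotient norm of x0 mod ker Tc is at most M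
  set K : Submodule ℝ X := LinearMap.ker (Tc : X →ₗ[ℝ] (ι → ℝ)) with hK
  haveI hKc : IsClosed (K : Set X) := ContinuousLinearMap.isClosed_ker Tc
  have hnorm : ‖(Submodule.Quotient.mk x0 : X ⧸ K)‖ ≤ M := by
    by_cases hz : (Submodule.Quotient.mk x0 : X ⧸ K) = 0
    · rw [hz, norm_zero]; exact hM
    obtain ⟨φ', hφ'norm, hφ'x⟩ := exists_dual_vector ℝ (Submodule.Quotient.mk x0 : X ⧸ K) (norm_ne_zero_iff.mpr hz)
    set mkC : X →L[ℝ] X ⧸ K := ⟨K.mkQ, continuous_quot_mk⟩ with hmkC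
    have hmkCnorm : ‖mkC‖ ≤ 1 := by
      refine mkC.opNorm_le_bound zero_le_one fun y => ?_
      rw [one_mul]; exact Submodule.Quotient.norm_mk_le K y
    set φ : X →L[ℝ] ℝ := φ'.comp mkC with hφ
    have hφnorm : ‖φ‖ ≤ 1 := by
      calc ‖φ‖ ≤ ‖φ'‖ * ‖mkC‖ := φ'.opNorm_comp_le mkC
      _ ≤ 1 * 1 := by rw [hφ'norm]; exact mul_le_mul_of_nonneg_left hmkCnorm zero_le_one
      _ = 1 := one_mul 1
    -- ker T ≤ ker φ, with ker T = K (as Tc and T agree)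
    have hkerT : LinearMap.ker T = K := rfl
    have hker : LinearMap.ker T ≤ LinearMap.ker (φ : X →ₗ[ℝ] ℝ) := by
      rw [hkerT]
      intro y hy
      have h0 : (Submodule.Quotient.mk y : X ⧸ K) = 0 :=
        (Submodule.Quotient.mk_eq_zero K).mpr hy
      simp only [LinearMap.mem_ker, ContinuousLinearMap.coe_coe, hφ,
        ContinuousLinearMap.comp_apply]
      show φ' (K.mkQ y) = 0
      rw [Submodule.mkQ_apply, h0, map_zero]
    -- factor through range T
    set eqv := T.quotKerEquivRange with heqv
    set φq : X ⧸ LinearMap.ker T →ₗ[ℝ] ℝ := (LinearMap.ker T).liftQ (φ : X →ₗ[ℝ] ℝ) hker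
      with hφq
    set ψ0 : LinearMap.range T →ₗ[ℝ] ℝ := φq.comp (eqv.symm : _ →ₗ[ℝ] _) with hψ0
    obtain ⟨ψ, hψext⟩ := LinearMap.exists_extend ψ0
    have hψT : ∀ y : X, ψ (T y) = φ y := by
      intro y
      have h1 : (⟨T y, LinearMap.mem_range_self T y⟩ : LinearMap.range T)
          = eqv (Submodule.Quotient.mk y) := by
        rw [heqv]
        exact Subtype.ext (LinearMap.quotKerEquivRange_apply_mk T y).symm
      calc ψ (T y) = ψ ((LinearMap.range T).subtype ⟨T y, LinearMap.mem_range_self T y⟩) := rfl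
      _ = ψ0 ⟨T y, LinearMap.mem_range_self T y⟩ := by rw [← hψext]; rfl
      _ = φq (eqv.symm (eqv (Submodule.Quotient.mk y))) := by rw [hψ0]; rw [h1]; rfl
      _ = φq (Submodule.Quotient.mk y) := by rw [eqv.symm_apply_apply]
      _ = φ y := Submodule.liftQ_apply _ _ _
    set a : ι → ℝ := fun i => ψ (u i) with ha
    have key : ∀ v : ι → ℝ, ψ v = ∑ i, v i * a i := by
      intro v
      conv_lhs => rw [pi_eq_sum_univ v]
      simp [ha, hu, map_sum, map_smul, smul_eq_mul]
    have hsum : (∑ i, a i • g i) = φ := by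
      ext y
      have h1 : (∑ i, a i • g i) y = ∑ i, (T y) i * a i := by
        simp [ContinuousLinearMap.sum_apply, ContinuousLinearMap.smul_apply, hT, hTc,
          ContinuousLinearMap.coe_pi, smul_eq_mul, mul_comm]
      rw [h1, ← key (T y), hψT]
    have hval : ‖(Submodule.Quotient.mk x0 : X ⧸ K)‖ = φ x0 := by
      rw [hφ]
      have : φ'.comp mkC x0 = φ' (Submodule.Quotient.mk x0) := rfl
      rw [this, hφ'x]
      norm_num
    have hφx0 : φ x0 = ∑ i, a i * c i := by
      rw [← hψT x0, hx0, key c]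
      simp [mul_comm]
    calc ‖(Submodule.Quotient.mk x0 : X ⧸ K)‖ = φ x0 := hval
    _ = ∑ i, a i * c i := hφx0
    _ ≤ |∑ i, a i * c i| := le_abs_self _
    _ ≤ M * ‖∑ i, a i • g i‖ := h a
    _ = M * ‖φ‖ := by rw [hsum]
    _ ≤ M * 1 := mul_le_mul_of_nonneg_left hφnorm hM
    _ = M := mul_one M
  obtain ⟨x, hxmk, hxlt⟩ := Submodule.Quotient.norm_mk_lt (Submodule.Quotient.mk x0 : X ⧸ K) hε
  refine ⟨x, lt_of_lt_of_le hxlt (by linarith), ?_⟩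
  have hmem : x - x0 ∈ K := (Submodule.Quotient.eq K).mp hxmk
  have hTeq : Tc x = Tc x0 := by
    have h0 : Tc (x - x0) = 0 := (LinearMap.mem_ker).mp hmem
    rw [map_sub, sub_eq_zero] at h0
    exact h0
  intro i
  have : (Tc x) i = c i := by rw [hTeq]; exact congrFun hx0 i
  simpa [hTc, ContinuousLinearMap.pi_apply] using this

lemma james_seq {X : Type*} [NormedAddCommGroup X] [NormedSpace ℝ X] [CompleteSpace X]
    (hns : ¬ Function.Surjective (NormedSpace.inclusionInDoubleDual ℝ X)) :
    ∃ (θ B : ℝ) (x : ℕ → X) (f : ℕ → (X →L[ℝ] ℝ)), 0 < θ ∧ (∀ n, ‖x n‖ ≤ B) ∧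
      (∀ n, ‖f n‖ ≤ 1) ∧ ∀ i j, f i (x j) = if i ≤ j then θ else 0 := by
  classical
  set J : X →L[ℝ] (StrongDual ℝ (StrongDual ℝ X)) := inclusionInDoubleDual ℝ X with hJ
  have hcl : IsClosed (Set.range J) := by
    have h0 : Isometry ⇑(inclusionInDoubleDualLi ℝ (E := X)) :=
      (inclusionInDoubleDualLi ℝ (E := X)).isometry
    have h1 := h0.isClosedEmbedding.isClosed_range
    have h2 : Set.range ⇑J = Set.range ⇑(inclusionInDoubleDualLi ℝ (E := X)) := rfl
    rw [h2]
    exact h1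
  obtain ⟨F, hF⟩ : ∃ F, F ∉ Set.range J := by
    rw [Function.Surjective] at hns
    push_neg at hns
    obtain ⟨F, hF⟩ := hns
    exact ⟨F, fun ⟨a, ha⟩ => hF a ha⟩
  set d : ℝ := Metric.infDist F (Set.range J) with hd
  have hd0 : 0 < d := (hcl.notMem_iff_infDist_pos ⟨J 0, Set.mem_range_self 0⟩).mp hF
  have hlb : ∀ (t : ℝ) (y : X), |t| * d ≤ ‖t • F + J y‖ := by
    intro t y
    rcases eq_or_ne t 0 with rfl | ht
    · simp; exact norm_nonneg (J y)
    · have h1 : d ≤ ‖F - J (-(t⁻¹ • y))‖ := by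
        refine le_of_le_of_eq ?_ (dist_eq_norm (E := StrongDual ℝ (StrongDual ℝ X)) F _)
        exact Metric.infDist_le_dist_of_mem (Set.mem_range_self _)
      have h2 : t • F + J y = t • (F - J (-(t⁻¹ • y))) := by
        rw [map_neg, map_smul]; ext φ; simp [ht]
      haveI : NormSMulClass ℝ (StrongDual ℝ (StrongDual ℝ X)) :=
        @NormedSpace.toNormSMulClass ℝ (StrongDual ℝ (StrongDual ℝ X)) _ _ _
      rw [h2, norm_smul, Real.norm_eq_abs]
      exact mul_le_mul_of_nonneg_left h1 (abs_nonneg t)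
  set θ : ℝ := d / 2 with hθ
  have hθ0 : 0 < θ := by positivity
  set D := (X →L[ℝ] ℝ)
  set P : X × D → Prop := fun p => ‖p.1‖ ≤ ‖F‖ + 1 ∧ ‖p.2‖ ≤ 1 ∧ F p.2 = θ ∧ p.2 p.1 = θ
    with hP
  set r : X × D → X × D → Prop := fun p q => q.2 p.1 = 0 ∧ p.2 q.1 = θ with hr
  have hstep : ∀ s : Finset (X × D), (∀ p ∈ s, P p) → ∃ y, P y ∧ ∀ p ∈ s, r p y := by
    intro s hs
    -- choose the functional fn
    set ι := Option {p : X × D // p ∈ s}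
    set h1 : ι → ((StrongDual ℝ X) →L[ℝ] ℝ) := fun i => i.elim F (fun p => J p.1.1) with hh1
    set c1 : ι → ℝ := fun i => i.elim θ (fun _ => 0) with hc1
    have hyp1 : ∀ a : ι → ℝ, |∑ i, a i * c1 i| ≤ (1/2) * ‖∑ i, a i • h1 i‖ := by
      intro a
      have e1 : ∑ i, a i * c1 i = a none * θ := by
        rw [Fintype.sum_option]
        simp [hc1]
      have e2 : ∑ i, a i • h1 i = a none • F + J (∑ p : {p : X × D // p ∈ s},
          a (some p) • p.1.1) := by
        rw [Fintype.sum_option, map_sum]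
        simp [hh1, map_smul]
      rw [e1, e2, abs_mul, abs_of_pos hθ0, hθ]
      calc |a none| * (d / 2) = (1/2) * (|a none| * d) := by ring
      _ ≤ (1/2) * ‖a none • F + J (∑ p : {p : X × D // p ∈ s}, a (some p) • p.1.1)‖ := by
          have := hlb (a none) (∑ p : {p : X × D // p ∈ s}, a (some p) • p.1.1)
          linarith
    obtain ⟨fn, hfn_norm, hfn_val⟩ := helly h1 c1 (by norm_num) (by norm_num : (0:ℝ) < 1/2) hyp1
    have hFfn : F fn = θ := hfn_val none
    have hfn_zero : ∀ p : {p : X × D // p ∈ s}, fn p.1.1 = 0 := by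
      intro p
      have := hfn_val (some p)
      simpa [hh1, hc1, hJ, NormedSpace.dual_def] using this
    -- choose the vector xn
    set h2 : ι → (X →L[ℝ] ℝ) := fun i => i.elim fn (fun p => p.1.2) with hh2
    have hFh2 : ∀ i, F (h2 i) = θ := by
      rintro (_ | p)
      · exact hFfn
      · exact (hs p.1 p.2).2.2.1
    have hyp2 : ∀ a : ι → ℝ, |∑ i, a i * ((fun _ => θ) i)| ≤ ‖F‖ * ‖∑ i, a i • h2 i‖ := by
      intro a
      have e1 : ∑ i, a i * θ = F (∑ i, a i • h2 i) := by
        rw [map_sum]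
        congr 1
        ext i
        rw [map_smul, hFh2, smul_eq_mul]
      calc |∑ i, a i * ((fun _ => θ) i)| = |F (∑ i, a i • h2 i)| := by rw [← e1]
      _ = ‖F (∑ i, a i • h2 i)‖ := (Real.norm_eq_abs _).symm
      _ ≤ ‖F‖ * ‖∑ i, a i • h2 i‖ := F.le_opNorm _
    obtain ⟨xn, hxn_norm, hxn_val⟩ := helly h2 (fun _ => θ) (norm_nonneg F)
      (by norm_num : (0:ℝ) < 1) hyp2
    refine ⟨(xn, fn), ⟨hxn_norm.le, hfn_norm.le.trans (by norm_num), hFfn, hxn_val none⟩,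
      fun p hp => ⟨hfn_zero ⟨p, hp⟩, hxn_val (some ⟨p, hp⟩)⟩⟩
  obtain ⟨q, hqP, hqr⟩ := exists_seq_of_forall_finset_exists P r hstep
  refine ⟨θ, ‖F‖ + 1, fun n => (q n).1, fun n => (q n).2, hθ0,
    fun n => (hqP n).1, fun n => (hqP n).2.1, ?_⟩
  intro i j
  rcases lt_trichotomy i j with hij | rfl | hij
  · rw [if_pos hij.le]
    exact (hqr i j hij).2
  · rw [if_pos le_rfl]
    exact (hqP i).2.2.2
  · rw [if_neg (by omega)]
    exact (hqr j i hij).1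

lemma reflexive_part {X : Type*} [NormedAddCommGroup X] [NormedSpace ℝ X] [CompleteSpace X]
    (hsurj : Function.Surjective (NormedSpace.inclusionInDoubleDual ℝ X))
    (e : ℕ → X) (f : ℕ → (X →L[ℝ] ℝ)) (C : ℝ)
    (he : ∀ i, ‖e i‖ ≤ C) (hf : ∀ j, ‖f j‖ ≤ C)
    (horth : ∀ i j, f i (e j) = if i = j then 1 else 0) :
    (¬ (∃ M : ℝ, ∀ n, ‖∑ i ∈ Finset.range n, e i‖ ≤ M) ∧
      ¬ (∃ M : ℝ, ∀ n, ‖∑ i ∈ Finset.range n, f i‖ ≤ M)) := by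
  set U : Filter ℕ := (hyperfilter ℕ : Filter ℕ) with hUdef
  have hUa : U ≤ atTop := Nat.hyperfilter_le_atTop
  haveI : U.NeBot := Ultrafilter.neBot _
  constructor
  · rintro ⟨M, hM⟩
    set s : ℕ → X := fun n => ∑ i ∈ Finset.range n, e i with hs
    obtain ⟨Λ, hΛ⟩ := ultra_functional (fun n => inclusionInDoubleDual ℝ X (s n)) M
      (fun n => (double_dual_bound ℝ X (s n)).trans (hM n))
    obtain ⟨x, hx⟩ := hsurj Λ
    have hxφ : ∀ φ : X →L[ℝ] ℝ, Tendsto (fun n => φ (s n)) U (𝓝 (φ x)) := by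
      intro φ
      have := hΛ φ
      rw [← hx] at this
      simpa [NormedSpace.dual_def] using this
    obtain ⟨g, hg⟩ := ultra_functional f C hf
    have hfx : ∀ j, f j x = 1 := by
      intro j
      refine tendsto_nhds_unique (hxφ (f j)) (tendsto_const_nhds.congr' ?_)
      filter_upwards [hUa (eventually_gt_atTop j)] with n hn
      simp [hs, map_sum, horth, Finset.sum_ite_eq, Finset.mem_range.mpr hn]
    have hgx1 : g x = 1 :=
      tendsto_nhds_unique (hg x) (tendsto_const_nhds.congr fun j => (hfx j).symm)
    have hge : ∀ i, g (e i) = 0 := by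
      intro i
      refine tendsto_nhds_unique (hg (e i)) (tendsto_const_nhds.congr' ?_) |>.symm.symm
      filter_upwards [hUa (eventually_gt_atTop i)] with j hj
      simp [horth, hj.ne']
    have hsz : ∀ n, g (s n) = 0 := fun n => by simp [hs, map_sum, hge]
    have hgx0 : g x = 0 :=
      tendsto_nhds_unique (hxφ g) (tendsto_const_nhds.congr fun n => (hsz n).symm)
    rw [hgx1] at hgx0; norm_num at hgx0
  · rintro ⟨M, hM⟩
    set σ : ℕ → (X →L[ℝ] ℝ) := fun n => ∑ i ∈ Finset.range n, f i with hσ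
    obtain ⟨Λ, hΛ⟩ := ultra_functional (fun j => inclusionInDoubleDual ℝ X (e j)) C
      (fun j => (double_dual_bound ℝ X (e j)).trans (he j))
    obtain ⟨x, hx⟩ := hsurj Λ
    have hxφ : ∀ φ : X →L[ℝ] ℝ, Tendsto (fun j => φ (e j)) U (𝓝 (φ x)) := by
      intro φ
      have := hΛ φ
      rw [← hx] at this
      simpa [NormedSpace.dual_def] using this
    obtain ⟨g, hg⟩ := ultra_functional σ M hM
    have hfx : ∀ i, f i x = 0 := by
      intro i
      refine tendsto_nhds_unique (hxφ (f i)) (tendsto_const_nhds.congr' ?_)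
      filter_upwards [hUa (eventually_gt_atTop i)] with j hj
      simp [horth, hj.ne]
    have hge : ∀ j, g (e j) = 1 := by
      intro j
      refine tendsto_nhds_unique (hg (e j)) (tendsto_const_nhds.congr' ?_) |>.symm.symm
      filter_upwards [hUa (eventually_gt_atTop j)] with n hn
      simp [hσ, ContinuousLinearMap.sum_apply, horth, Finset.sum_ite_eq,
        Finset.mem_range.mpr hn]
    have hgx1 : g x = 1 :=
      tendsto_nhds_unique (hxφ g) (tendsto_const_nhds.congr fun j => (hge j).symm)
    have hσz : ∀ n, σ n x = 0 := fun n => by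
      simp [hσ, ContinuousLinearMap.sum_apply, hfx]
    have hgx0 : g x = 0 :=
      tendsto_nhds_unique (hg x) (tendsto_const_nhds.congr fun n => (hσz n).symm)
    rw [hgx1] at hgx0; norm_num at hgx0

set_option maxHeartbeats 1000000 in
lemma nonreflexive_part {X : Type*} [NormedAddCommGroup X] [NormedSpace ℝ X] [CompleteSpace X]
    (hns : ¬ Function.Surjective (NormedSpace.inclusionInDoubleDual ℝ X)) :
    ∃ (e : ℕ → X) (f : ℕ → (X →L[ℝ] ℝ)) (C : ℝ),
      (∀ i, ‖e i‖ ≤ C) ∧ (∀ j, ‖f j‖ ≤ C) ∧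
      (∀ i j, f i (e j) = if i = j then 1 else 0) ∧
      ((∃ M : ℝ, ∀ n, ‖∑ i ∈ Finset.range n, e i‖ ≤ M) ∨
        (∃ M : ℝ, ∀ n, ‖∑ i ∈ Finset.range n, f i‖ ≤ M)) := by
  obtain ⟨θ, B, x, f, hθ, hx, hf, hij⟩ := james_seq hns
  have hB : 0 ≤ B := (norm_nonneg (x 0)).trans (hx 0)
  set e : ℕ → X := fun j => Nat.casesOn j (x 0) (fun k => x (k + 1) - x k) with he
  set f' : ℕ → (X →L[ℝ] ℝ) := fun i => θ⁻¹ • f i with hf'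
  refine ⟨e, f', max (2 * B) θ⁻¹, ?_, ?_, ?_, Or.inl ⟨B, ?_⟩⟩
  · rintro (_ | k)
    · exact ((hx 0).trans (by linarith)).trans (le_max_left _ _)
    · refine le_trans ?_ (le_max_left _ _)
      calc ‖x (k+1) - x k‖ ≤ ‖x (k+1)‖ + ‖x k‖ := norm_sub_le _ _
      _ ≤ 2 * B := by have := hx (k+1); have := hx k; linarith
  · intro j
    refine le_trans ?_ (le_max_right _ _)
    show ‖θ⁻¹ • f j‖ ≤ θ⁻¹
    calc ‖θ⁻¹ • f j‖ ≤ ‖θ⁻¹‖ * ‖f j‖ := ContinuousLinearMap.opNorm_smul_le _ _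
    _ = θ⁻¹ * ‖f j‖ := by rw [Real.norm_eq_abs, abs_of_pos (inv_pos.mpr hθ)]
    _ ≤ θ⁻¹ * 1 := mul_le_mul_of_nonneg_left (hf j) (inv_pos.mpr hθ).le
    _ = θ⁻¹ := mul_one _
  · intro i j
    have happ : ∀ z, f' i z = θ⁻¹ * f i z := fun z => rfl
    cases j with
    | zero =>
      rw [happ]
      show θ⁻¹ * f i (x 0) = _
      rcases Nat.eq_zero_or_pos i with rfl | hi
      · rw [hij, if_pos le_rfl, inv_mul_cancel₀ hθ.ne', if_pos rfl]
      · rw [hij, if_neg (by omega), if_neg (by omega), mul_zero]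
    | succ k =>
      rw [happ]
      show θ⁻¹ * f i (x (k+1) - x k) = _
      rw [map_sub, hij, hij]
      rcases lt_trichotomy i (k + 1) with hik | rfl | hik
      · rw [if_pos (by omega), if_pos (by omega), sub_self, mul_zero, if_neg (by omega)]
      · rw [if_pos le_rfl, if_neg (by omega), sub_zero, inv_mul_cancel₀ hθ.ne', if_pos rfl]
      · rw [if_neg (by omega), if_neg (by omega), sub_self, mul_zero, if_neg (by omega)]
  · have key : ∀ n, ∑ i ∈ Finset.range (n + 1), e i = x n := by
      intro n
      induction n with
      | zero => simp [he]
      | succ k ih =>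
        rw [Finset.sum_range_succ, ih]
        show x k + (x (k+1) - x k) = x (k+1)
        abel
    rintro (_ | n)
    · simpa using hB
    · rw [key n]; exact hx n

/-- Every non-reflexive Banach space admits a bounded biorthogonal system with uniformly
bounded partial sums of one of the two sequences; conversely, in a reflexive Banach space
no bounded biorthogonal system has this property. -/
theorem nonreflexive_biorthogonal_system {X : Type*} [NormedAddCommGroup X]
    [NormedSpace ℝ X] [CompleteSpace X] :
    (¬ Function.Surjective (NormedSpace.inclusionInDoubleDual ℝ X) →
      ∃ (e : ℕ → X) (f : ℕ → (X →L[ℝ] ℝ)) (C : ℝ),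
        (∀ i, ‖e i‖ ≤ C) ∧ (∀ j, ‖f j‖ ≤ C) ∧
        (∀ i j, f i (e j) = if i = j then 1 else 0) ∧
        ((∃ M : ℝ, ∀ n, ‖∑ i ∈ Finset.range n, e i‖ ≤ M) ∨
          (∃ M : ℝ, ∀ n, ‖∑ i ∈ Finset.range n, f i‖ ≤ M))) ∧
    (Function.Surjective (NormedSpace.inclusionInDoubleDual ℝ X) →
      ∀ (e : ℕ → X) (f : ℕ → (X →L[ℝ] ℝ)) (C : ℝ),
        (∀ i, ‖e i‖ ≤ C) → (∀ j, ‖f j‖ ≤ C) →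
        (∀ i j, f i (e j) = if i = j then 1 else 0) →
        (¬ (∃ M : ℝ, ∀ n, ‖∑ i ∈ Finset.range n, e i‖ ≤ M) ∧
          ¬ (∃ M : ℝ, ∀ n, ‖∑ i ∈ Finset.range n, f i‖ ≤ M))) := by
  exact ⟨fun hns => nonreflexive_part hns,
    fun hs e f C he hf ho => reflexive_part hs e f C he hf ho⟩
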